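/- Let G = G₀ *_H G₁ be a nondegenerate free product with amalgamation. Then FC(G), the subgroup of elements of G with finite conjugacy class, is contained in H; in particular, every element of (G₀ ∪ G₁) \ H has infinite conjugacy class in G. -/

import Mathlib

variable {G : Type*} [Group G]

/-- `AltWord G₀ G₁ H j w`: the list `w` is an alternating word whose `i`-th letter lies in
`G_{(i+j) mod 2} \ H`. -/
def AltWord (G₀ G₁ H : Subgroup G) (j : ℕ) (w : List G) : Prop :=
  ∀ (i : ℕ) (hi : i < w.length),
    w.get ⟨i, hi⟩ ∈ (if (i + j) % 2 = 0 then (G₀ : Set G) else (G₁ : Set G)) \ (H : Set G)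

/-- `G` is the free product of its subgroups `G₀` and `G₁` amalgamated over their common
subgroup `H` (internal characterization: `G₀ ∩ G₁ = H`, the subgroups `G₀` and `G₁` generate
`G`, and no nonempty alternating word with letters in `G₀ \ H` and `G₁ \ H` has product
in `H`). -/
structure IsAmalgam (G₀ G₁ H : Subgroup G) : Prop where
  le_left : H ≤ G₀
  le_right : H ≤ G₁
  inf_eq : G₀ ⊓ G₁ = H
  closure_eq_top : Subgroup.closure ((G₀ : Set G) ∪ (G₁ : Set G)) = ⊤
  reduced : ∀ (j : ℕ) (w : List G), w ≠ [] → AltWord G₀ G₁ H j w → w.prod ∉ H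

/-- The amalgam `G₀ *_H G₁` is *nondegenerate*: `([G₀ : H] − 1) · ([G₁ : H] − 1) ≥ 2`,
i.e. `H` is a proper subgroup of both `G₀` and `G₁`, and has index at least `3` (possibly
infinite) in at least one of them. -/
def Nondegenerate (G₀ G₁ H : Subgroup G) : Prop :=
  H.relIndex G₀ ≠ 1 ∧ H.relIndex G₁ ≠ 1 ∧ ¬(H.relIndex G₀ = 2 ∧ H.relIndex G₁ = 2)

/-- `T_{j,k}`: the set of elements of `G` that are products of alternating words of length
`k` whose first letter lies in `G_j \ H`; by convention `T_{j,0} = H`. -/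
def TT (G₀ G₁ H : Subgroup G) (j k : ℕ) : Set G :=
  if k = 0 then (H : Set G)
  else {g | ∃ w : List G, w.length = k ∧ AltWord G₀ G₁ H j w ∧ w.prod = g}

/-- `C_{j,k} = ⋂_{g ∈ T_{j,k}} g H g⁻¹`. -/
def CC (G₀ G₁ H : Subgroup G) (j k : ℕ) : Set G :=
  ⋂ g ∈ TT G₀ G₁ H j k, {x | g⁻¹ * x * g ∈ H}

/-- `K_j = ⋂_{k ≥ 0} C_{j,k}`. -/
def KK (G₀ G₁ H : Subgroup G) (j : ℕ) : Set G :=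
  ⋂ k : ℕ, CC G₀ G₁ H j k

/-- The kernel of the amalgam, `ker G = ⋂_{g ∈ G} g H g⁻¹`, as a set. -/
def amalgamKerSet (H : Subgroup G) : Set G :=
  ⋂ g : G, {x | g⁻¹ * x * g ∈ H}

namespace AmalgamProof

def F (G₀ G₁ : Subgroup G) (j : ℕ) : Subgroup G := if j % 2 = 0 then G₀ else G₁

def Alt (G₀ G₁ H : Subgroup G) (j : ℕ) (w : List G) : Prop :=
  ∀ (i : ℕ) (hi : i < w.length), w.get ⟨i, hi⟩ ∈ (F G₀ G₁ (i + j) : Set G) \ (H : Set G)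

variable {G₀ G₁ H : Subgroup G}

lemma F_congr {m n : ℕ} (h : m % 2 = n % 2) : F G₀ G₁ m = F G₀ G₁ n := by
  unfold F; rw [h]

lemma alt_nil {j : ℕ} : Alt G₀ G₁ H j [] := by
  intro i hi; simp at hi

lemma alt_congr {j j' : ℕ} (h : j % 2 = j' % 2) {w : List G} (hw : Alt G₀ G₁ H j w) :
    Alt G₀ G₁ H j' w := by
  intro i hi
  rw [← F_congr (m := i + j) (by omega)]
  exact hw i hi

lemma alt_cons {j : ℕ} {x : G} {w : List G} :
    Alt G₀ G₁ H j (x :: w) ↔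
      (x ∈ (F G₀ G₁ j : Set G) \ H ∧ Alt G₀ G₁ H (j + 1) w) := by
  constructor
  · intro h
    refine ⟨by simpa using h 0 (by simp), fun i hi => ?_⟩
    have := h (i + 1) (by simpa using hi)
    simpa [show i + 1 + j = i + (j + 1) by omega] using this
  · rintro ⟨hx, hw⟩ i hi
    match i with
    | 0 => simpa using hx
    | (i + 1) =>
      have := hw i (by simpa using hi)
      simpa [show i + 1 + j = i + (j + 1) by omega] using this

lemma alt_append {j : ℕ} {u v : List G} :
    Alt G₀ G₁ H j (u ++ v) ↔ (Alt G₀ G₁ H j u ∧ Alt G₀ G₁ H (j + u.length) v) := by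
  induction u generalizing j with
  | nil => simp [alt_nil]
  | cons x u ih =>
    simp only [List.cons_append, alt_cons, ih, List.length_cons]
    rw [show j + 1 + u.length = j + (u.length + 1) by omega]
    tauto

lemma alt_singleton {j : ℕ} {x : G} :
    Alt G₀ G₁ H j [x] ↔ x ∈ (F G₀ G₁ j : Set G) \ H := by
  simp [alt_cons, alt_nil]

lemma alt_reverse_inv {j : ℕ} {w : List G} (hw : Alt G₀ G₁ H j w) :
    Alt G₀ G₁ H (j + w.length + 1) (w.reverse.map (·⁻¹)) := by
  induction w generalizing j with
  | nil => exact alt_nil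
  | cons x w ih =>
    rw [alt_cons] at hw
    have h1 := ih hw.2
    simp only [List.reverse_cons, List.map_append, List.map_cons, List.map_nil]
    rw [alt_append]
    constructor
    · exact alt_congr (by simp; omega) h1
    · rw [List.length_map, List.length_reverse]
      rw [alt_singleton, ← F_congr (m := j) (by simp; omega)]
      exact ⟨(F G₀ G₁ j).inv_mem hw.1.1, fun hh => hw.1.2 (by simpa using H.inv_mem hh)⟩


/-- Normal form: an element is in `H` or is the product of a nonempty alternating word. -/
def NF (G₀ G₁ H : Subgroup G) (g : G) : Prop :=
  g ∈ H ∨ ∃ (j : ℕ) (w : List G), w ≠ [] ∧ Alt G₀ G₁ H j w ∧ w.prod = g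

section
variable (hle₀ : H ≤ G₀) (hle₁ : H ≤ G₁)

include hle₀ hle₁

lemma H_le_F (j : ℕ) : H ≤ F G₀ G₁ j := by
  unfold F; split <;> assumption

/-- Multiplying an alternating word on the left by an element of `H` gives an
alternating word of the same shape. -/
lemma leftH {h : G} (hh : h ∈ H) {j : ℕ} {w : List G} (hw : Alt G₀ G₁ H j w)
    (hne : w ≠ []) :
    ∃ w' : List G, w'.length = w.length ∧ Alt G₀ G₁ H j w' ∧ w'.prod = h * w.prod := by
  obtain ⟨x, w, rfl⟩ := List.exists_cons_of_ne_nil hne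
  rw [alt_cons] at hw
  refine ⟨(h * x) :: w, by simp, ?_, by simp [mul_assoc]⟩
  rw [alt_cons]
  refine ⟨⟨(F G₀ G₁ j).mul_mem (H_le_F hle₀ hle₁ j hh) hw.1.1, fun hmem => hw.1.2 ?_⟩, hw.2⟩
  simpa using H.mul_mem (H.inv_mem hh) hmem

lemma nf_inv {g : G} (hg : NF G₀ G₁ H g) : NF G₀ G₁ H g⁻¹ := by
  rcases hg with hg | ⟨j, w, hne, hw, hprod⟩
  · exact Or.inl (H.inv_mem hg)
  · refine Or.inr ⟨j + w.length + 1, w.reverse.map (·⁻¹), by simpa using hne,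
      alt_reverse_inv hw, ?_⟩
    rw [← hprod, List.prod_inv_reverse]
    simp [List.map_reverse]

lemma nf_mul_letter {m : ℕ} {x g : G} (hx : x ∈ (F G₀ G₁ m : Set G) \ H)
    (hg : NF G₀ G₁ H g) : NF G₀ G₁ H (x * g) := by
  rcases hg with hg | ⟨j, w, hne, hw, hprod⟩
  · refine Or.inr ⟨m, [x * g], by simp, ?_, by simp⟩
    rw [alt_singleton]
    exact ⟨(F G₀ G₁ m).mul_mem hx.1 (H_le_F hle₀ hle₁ m hg),
      fun hmem => hx.2 (by simpa using H.mul_mem hmem (H.inv_mem hg))⟩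
  · obtain ⟨y, w', rfl⟩ := List.exists_cons_of_ne_nil hne
    rw [alt_cons] at hw
    by_cases hpar : m % 2 = j % 2
    · -- merge x with the head
      by_cases hmem : x * y ∈ H
      · -- absorb into the rest
        rcases List.eq_nil_or_concat w' with rfl | ⟨_, _, hne'⟩
        · simp only [List.prod_cons, List.prod_nil, mul_one] at hprod
          rw [← hprod]
          exact Or.inl hmem
        · have hne' : w' ≠ [] := by rintro rfl; simp at hne'
          obtain ⟨w'', hlen, hw'', hprod''⟩ := leftH hle₀ hle₁ hmem hw.2 hne'
          refine Or.inr ⟨j + 1, w'', fun hc => hne' (by simpa [hc] using hlen.symm), hw'', ?_⟩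
          rw [hprod'', ← hprod]
          simp [mul_assoc]
      · refine Or.inr ⟨j, (x * y) :: w', by simp, ?_, by rw [← hprod]; simp [mul_assoc]⟩
        rw [alt_cons]
        refine ⟨⟨?_, hmem⟩, hw.2⟩
        have : x ∈ F G₀ G₁ j := by rw [← F_congr hpar]; exact hx.1
        exact (F G₀ G₁ j).mul_mem this hw.1.1
    · -- prepend
      refine Or.inr ⟨m, x :: y :: w', by simp, ?_, by rw [← hprod]; simp⟩
      rw [alt_cons]
      exact ⟨hx, alt_congr (by omega) (alt_cons.mpr hw)⟩

lemma nf_word_mul {g : G} (hg : NF G₀ G₁ H g) {j : ℕ} {w : List G}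
    (hw : Alt G₀ G₁ H j w) : NF G₀ G₁ H (w.prod * g) := by
  induction w generalizing j with
  | nil => simpa using hg
  | cons x w ih =>
    rw [alt_cons] at hw
    rw [List.prod_cons, mul_assoc]
    exact nf_mul_letter hle₀ hle₁ hw.1 (ih hw.2)

lemma nf_mul {a b : G} (hab : NF G₀ G₁ H a) (hb : NF G₀ G₁ H b) : NF G₀ G₁ H (a * b) := by
  rcases hab with ha | ⟨j, w, hne, hw, hprod⟩
  · rcases hb with hb | ⟨j, w, hne, hw, hprod⟩
    · exact Or.inl (H.mul_mem ha hb)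
    · obtain ⟨w', hlen, hw', hprod'⟩ := leftH hle₀ hle₁ ha hw hne
      exact Or.inr ⟨j, w', fun hc => hne (by simpa [hc] using hlen.symm), hw',
        by rw [hprod', hprod]⟩
  · rw [← hprod]; exact nf_word_mul hle₀ hle₁ hb hw

end

section
variable (hle₀ : H ≤ G₀) (hle₁ : H ≤ G₁)

/-- Cyclic reduction: every nonempty alternating word is conjugate to one of even length
or a single letter. -/
lemma cyclic_reduce (hle₀ : H ≤ G₀) (hle₁ : H ≤ G₁) :
    ∀ (n : ℕ) (w : List G), w.length = n → w ≠ [] → ∀ j, Alt G₀ G₁ H j w →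
      ∃ (u : G) (j' : ℕ) (w' : List G), w' ≠ [] ∧ Alt G₀ G₁ H j' w' ∧
        (w'.length % 2 = 0 ∨ w'.length = 1) ∧ w'.prod = u * w.prod * u⁻¹ := by
  intro n
  induction n using Nat.strong_induction_on with
  | _ n ih =>
    intro w hlen hne j hw
    by_cases hpar : w.length % 2 = 0 ∨ w.length = 1
    · exact ⟨1, j, w, hne, hw, hpar, by simp⟩
    · push_neg at hpar
      obtain ⟨hodd, hne1⟩ := hpar
      have hk3 : 3 ≤ w.length := by
        have : 1 ≤ w.length := List.length_pos_iff.mpr hne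
        omega
      obtain ⟨w₀, z, rfl⟩ : ∃ w₀ z, w = w₀ ++ [z] := by
        rcases List.eq_nil_or_concat w with rfl | ⟨w₀, z, h⟩
        · exact absurd rfl hne
        · exact ⟨w₀, z, by simpa using h⟩
      rw [alt_append] at hw
      have hz : z ∈ (F G₀ G₁ (j + w₀.length) : Set G) \ H := alt_singleton.mp hw.2
      obtain ⟨x, w₁, rfl⟩ : ∃ x w₁, w₀ = x :: w₁ := by
        rcases w₀ with _ | ⟨x, w₁⟩
        · simp at hk3
        · exact ⟨x, w₁, rfl⟩
      have hx : x ∈ (F G₀ G₁ j : Set G) \ H := (alt_cons.mp hw.1).1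
      have hw₁ : Alt G₀ G₁ H (j + 1) w₁ := (alt_cons.mp hw.1).2
      simp only [List.length_append, List.length_cons, List.length_nil] at hodd hne1 hk3 hlen
      have hoddk : w₁.length % 2 = 1 := by omega
      have hzj : z ∈ (F G₀ G₁ j : Set G) \ H := by
        rw [← F_congr (m := j + (x :: w₁).length) (by simp [List.length_cons]; omega)]
        exact hz
      have hconj : z * ((x :: w₁) ++ [z]).prod * z⁻¹ = (z * x) * w₁.prod := by
        simp [List.prod_append, mul_assoc]
      by_cases hmem : z * x ∈ H
      · -- absorb and recurse
        have hne₁ : w₁ ≠ [] := by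
          intro hc
          rw [hc] at hoddk; simp at hoddk
        obtain ⟨w₂, hlen₂, hw₂, hprod₂⟩ := leftH hle₀ hle₁ hmem hw₁ hne₁
        have hlt : w₂.length < n := by rw [hlen₂]; omega
        obtain ⟨u, j', w', hne', hw', hpar', hprod'⟩ :=
          ih w₂.length hlt w₂ rfl (fun hc => hne₁ (by simpa [hc] using hlen₂.symm)) _ hw₂
        refine ⟨u * z, j', w', hne', hw', hpar', ?_⟩
        rw [hprod', hprod₂, ← hconj]
        simp [mul_assoc]
      · -- done after one conjugation
        refine ⟨z, j, (z * x) :: w₁, by simp, ?_, ?_, ?_⟩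
        · rw [alt_cons]
          exact ⟨⟨(F G₀ G₁ j).mul_mem hzj.1 hx.1, hmem⟩, hw₁⟩
        · left; simp; omega
        · rw [hconj]; simp [mul_assoc]
end

def powW (s t : G) : ℕ → List G
  | 0 => []
  | p + 1 => s :: t :: powW s t p

lemma powW_length (s t : G) (p : ℕ) : (powW s t p).length = 2 * p := by
  induction p with
  | zero => rfl
  | succ p ih => simp [powW, ih]; omega

lemma powW_prod (s t : G) (p : ℕ) : (powW s t p).prod = (s * t) ^ p := by
  induction p with
  | zero => simp [powW]
  | succ p ih => rw [powW]; simp [ih, pow_succ', mul_assoc]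

lemma powW_ne_nil (s t : G) (p : ℕ) : powW s t (p + 1) ≠ [] := by
  rw [powW]; simp

lemma powW_alt {m : ℕ} {s t : G} (hs : s ∈ (F G₀ G₁ m : Set G) \ H)
    (ht : t ∈ (F G₀ G₁ (m + 1) : Set G) \ H) (p : ℕ) :
    Alt G₀ G₁ H m (powW s t p) := by
  induction p with
  | zero => exact alt_nil
  | succ p ih =>
    rw [powW, alt_cons, alt_cons]
    exact ⟨hs, ht, alt_congr (by omega) ih⟩

lemma mem_diff_congr {m m' : ℕ} (h : m % 2 = m' % 2) {x : G}
    (hx : x ∈ (F G₀ G₁ m : Set G) \ H) : x ∈ (F G₀ G₁ m' : Set G) \ H := by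
  rwa [F_congr h] at hx

lemma mem_diff_inv {m m' : ℕ} (h : m % 2 = m' % 2) {x : G}
    (hx : x ∈ (F G₀ G₁ m : Set G) \ H) : x⁻¹ ∈ (F G₀ G₁ m' : Set G) \ H := by
  rw [← F_congr h]
  exact ⟨(F G₀ G₁ m).inv_mem hx.1, fun hc => hx.2 (by simpa using H.inv_mem hc)⟩

lemma tinv_sinv_pow {s t : G} (m : ℕ) : (t⁻¹ * s⁻¹) ^ m = ((s * t) ^ m)⁻¹ := by
  rw [← mul_inv_rev, ← inv_pow]

section
variable (hle₀ : H ≤ G₀) (hle₁ : H ≤ G₁)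
include hle₀ hle₁

set_option maxHeartbeats 1000000 in
lemma conj_pow_not_mem_single
    (hred : ∀ (j : ℕ) (w : List G), w ≠ [] → Alt G₀ G₁ H j w → w.prod ∉ H)
    {m : ℕ} {g b a : G}
    (hg : g ∈ (F G₀ G₁ m : Set G) \ H)
    (hb : b ∈ (F G₀ G₁ m : Set G) \ H)
    (ha : a ∈ (F G₀ G₁ (m + 1) : Set G) \ H) :
    ∀ r : ℕ, 1 ≤ r → (b * a) ^ r * g * ((b * a) ^ r)⁻¹ * g⁻¹ ∉ H := by
  intro r hr
  obtain ⟨p, rfl⟩ : ∃ p, r = p + 1 := ⟨r - 1, by omega⟩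
  have hainv : a⁻¹ ∈ (F G₀ G₁ (m + 1) : Set G) \ H := mem_diff_inv rfl ha
  have hbinv : b⁻¹ ∈ (F G₀ G₁ (m + 1 + 1) : Set G) \ H := mem_diff_inv (by omega) hb
  by_cases hcase : b⁻¹ * g⁻¹ ∈ H
  · -- cascaded word
    set W := powW b a (p+1) ++ ([g] ++ (powW a⁻¹ b⁻¹ p ++ [a⁻¹ * (b⁻¹ * g⁻¹)])) with hW
    have h4 : Alt G₀ G₁ H (m+1) (powW a⁻¹ b⁻¹ p ++ [a⁻¹ * (b⁻¹ * g⁻¹)]) := by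
      have hlast : Alt G₀ G₁ H (m+1) [a⁻¹ * (b⁻¹ * g⁻¹)] := by
        refine alt_singleton.mpr ⟨(F G₀ G₁ (m+1)).mul_mem hainv.1
          (H_le_F hle₀ hle₁ (m+1) hcase), fun hc => hainv.2 ?_⟩
        have := H.mul_mem hc (H.inv_mem hcase)
        simpa [mul_assoc] using this
      exact alt_append.mpr ⟨powW_alt hainv hbinv p,
        alt_congr (j := m+1) (by simp [powW_length]) hlast⟩
    have h2 : Alt G₀ G₁ H m ([g] ++ (powW a⁻¹ b⁻¹ p ++ [a⁻¹ * (b⁻¹ * g⁻¹)])) :=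
      alt_append.mpr ⟨alt_singleton.mpr hg, alt_congr (by simp) h4⟩
    have h1 : Alt G₀ G₁ H m W :=
      alt_append.mpr ⟨powW_alt hb ha (p+1), alt_congr (by simp [powW_length]) h2⟩
    have hne : W ≠ [] := by rw [hW, powW]; simp
    have hWH := hred m W hne h1
    intro hcon
    apply hWH
    have hprod : W.prod = (b * a) ^ (p+1) * g * ((b * a) ^ (p+1))⁻¹ * g⁻¹ := by
      rw [hW]
      simp only [List.prod_append, List.prod_cons, List.prod_nil, powW_prod, mul_one]
      rw [tinv_sinv_pow]
      have e1 : a⁻¹ * (b⁻¹ * g⁻¹) = (b * a)⁻¹ * g⁻¹ := by rw [mul_inv_rev, mul_assoc]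
      have e2 : ((b * a) ^ p)⁻¹ * ((b * a)⁻¹ * g⁻¹) = ((b * a) ^ (p + 1))⁻¹ * g⁻¹ := by
        rw [← mul_assoc, ← mul_inv_rev, ← pow_succ']
      rw [e1, e2]
      simp [mul_assoc]
    rwa [hprod]
  · -- non-cascaded word
    set W := powW b a (p+1) ++ ([g] ++ (powW a⁻¹ b⁻¹ p ++ ([a⁻¹] ++ [b⁻¹ * g⁻¹]))) with hW
    have h5 : Alt G₀ G₁ H m [b⁻¹ * g⁻¹] := by
      refine alt_singleton.mpr ⟨(F G₀ G₁ m).mul_mem ((F G₀ G₁ m).inv_mem hb.1) ?_, hcase⟩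
      exact (F G₀ G₁ m).inv_mem hg.1
    have h4 : Alt G₀ G₁ H (m+1) ([a⁻¹] ++ [b⁻¹ * g⁻¹]) :=
      alt_append.mpr ⟨alt_singleton.mpr hainv, alt_congr (by simp; omega) h5⟩
    have h3 : Alt G₀ G₁ H (m+1) (powW a⁻¹ b⁻¹ p ++ ([a⁻¹] ++ [b⁻¹ * g⁻¹])) :=
      alt_append.mpr ⟨powW_alt hainv hbinv p, alt_congr (by simp [powW_length]) h4⟩
    have h2 : Alt G₀ G₁ H m ([g] ++ (powW a⁻¹ b⁻¹ p ++ ([a⁻¹] ++ [b⁻¹ * g⁻¹]))) :=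
      alt_append.mpr ⟨alt_singleton.mpr hg, alt_congr (by simp) h3⟩
    have h1 : Alt G₀ G₁ H m W :=
      alt_append.mpr ⟨powW_alt hb ha (p+1), alt_congr (by simp [powW_length]) h2⟩
    have hne : W ≠ [] := by rw [hW, powW]; simp
    have hWH := hred m W hne h1
    intro hcon
    apply hWH
    have hprod : W.prod = (b * a) ^ (p+1) * g * ((b * a) ^ (p+1))⁻¹ * g⁻¹ := by
      rw [hW]
      simp only [List.prod_append, List.prod_cons, List.prod_nil, powW_prod, mul_one]
      rw [tinv_sinv_pow]
      have e1 : a⁻¹ * (b⁻¹ * g⁻¹) = (b * a)⁻¹ * g⁻¹ := by rw [mul_inv_rev, mul_assoc]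
      have e2 : ((b * a) ^ p)⁻¹ * ((b * a)⁻¹ * g⁻¹) = ((b * a) ^ (p + 1))⁻¹ * g⁻¹ := by
        rw [← mul_assoc, ← mul_inv_rev, ← pow_succ']
      rw [e1, e2]
      simp [mul_assoc]
    rwa [hprod]

end

section
variable (hle₀ : H ≤ G₀) (hle₁ : H ≤ G₁)
include hle₀ hle₁

set_option maxHeartbeats 1000000 in
lemma conj_pow_not_mem_even
    (hred : ∀ (j : ℕ) (w : List G), w ≠ [] → Alt G₀ G₁ H j w → w.prod ∉ H)
    {j : ℕ} {v₁ : List G} {y z s t : G}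
    (hw : Alt G₀ G₁ H j (v₁ ++ [y, z])) (hv : v₁.length % 2 = 0)
    (hs : s ∈ (F G₀ G₁ j : Set G) \ H) (ht : t ∈ (F G₀ G₁ (j + 1) : Set G) \ H)
    (hcase : z * t⁻¹ ∉ H ∨ (z * t⁻¹ ∈ H ∧ y * (z * t⁻¹) * s⁻¹ ∉ H)) :
    ∀ r : ℕ, 1 ≤ r →
      (s * t) ^ r * (v₁ ++ [y, z]).prod * ((s * t) ^ r)⁻¹ * (v₁ ++ [y, z]).prod⁻¹ ∉ H := by
  intro r hr
  obtain ⟨p, rfl⟩ : ∃ p, r = p + 1 := ⟨r - 1, by omega⟩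
  have hv₁ : Alt G₀ G₁ H j v₁ := (alt_append.mp hw).1
  have hyz : Alt G₀ G₁ H (j + v₁.length) [y, z] := (alt_append.mp hw).2
  have hy : y ∈ (F G₀ G₁ (j + v₁.length) : Set G) \ H := (alt_cons.mp hyz).1
  have hz : z ∈ (F G₀ G₁ (j + v₁.length + 1) : Set G) \ H :=
    alt_singleton.mp (alt_cons.mp hyz).2
  have hyj : y ∈ (F G₀ G₁ j : Set G) \ H := mem_diff_congr (by omega) hy
  have hzj : z ∈ (F G₀ G₁ (j + 1) : Set G) \ H := mem_diff_congr (by omega) hz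
  have htinv : t⁻¹ ∈ (F G₀ G₁ (j + 1) : Set G) \ H := mem_diff_inv rfl ht
  have hsinv : s⁻¹ ∈ (F G₀ G₁ (j + 1 + 1) : Set G) \ H := mem_diff_inv (by omega) hs
  set wbar := ((v₁ ++ [y, z]).reverse).map (·⁻¹) with hwbardef
  have hwbar : Alt G₀ G₁ H (j + (v₁ ++ [y, z]).length + 1) wbar := alt_reverse_inv hw
  have hbarlen : wbar.length = v₁.length + 2 := by simp [hwbardef]
  have hbarprod : wbar.prod = (v₁ ++ [y, z]).prod⁻¹ := by
    rw [show wbar = (List.map (fun x => x⁻¹) (v₁ ++ [y, z])).reverse by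
      simp [hwbardef, List.map_reverse], ← List.prod_inv_reverse]
  have hB5 : Alt G₀ G₁ H (j + 1) (powW t⁻¹ s⁻¹ p ++ wbar) := by
    refine alt_append.mpr ⟨powW_alt htinv hsinv p, alt_congr
      (j := j + (v₁ ++ [y, z]).length + 1) (by simp [powW_length]; omega) hwbar⟩
  have key : ((s * t) ^ (p + 1))⁻¹ = t⁻¹ * (s⁻¹ * ((s * t) ^ p)⁻¹) := by
    rw [pow_succ, mul_inv_rev, mul_inv_rev, mul_assoc]
  rcases hcase with hzt | ⟨hzt, hys⟩
  · -- non-cascaded word W₁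
    set W := powW s t (p + 1) ++ ((v₁ ++ [y]) ++ ([z * t⁻¹] ++ ([s⁻¹] ++
      (powW t⁻¹ s⁻¹ p ++ wbar)))) with hWdef
    have hB4 : Alt G₀ G₁ H j ([s⁻¹] ++ (powW t⁻¹ s⁻¹ p ++ wbar)) :=
      alt_append.mpr ⟨alt_singleton.mpr (mem_diff_inv (by omega) hs),
        alt_congr (j := j + 1) (by simp) hB5⟩
    have hB3 : Alt G₀ G₁ H (j + 1) ([z * t⁻¹] ++ ([s⁻¹] ++ (powW t⁻¹ s⁻¹ p ++ wbar))) :=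
      alt_append.mpr ⟨alt_singleton.mpr ⟨(F G₀ G₁ (j + 1)).mul_mem hzj.1 htinv.1, hzt⟩,
        alt_congr (j := j) (by simp; omega) hB4⟩
    have hB2 : Alt G₀ G₁ H j ((v₁ ++ [y]) ++ ([z * t⁻¹] ++ ([s⁻¹] ++ (powW t⁻¹ s⁻¹ p ++ wbar)))) := by
      refine alt_append.mpr ⟨alt_append.mpr ⟨hv₁, ?_⟩, alt_congr (j := j + 1) (by simp; omega) hB3⟩
      exact alt_singleton.mpr hy
    have hB1 : Alt G₀ G₁ H j W :=
      alt_append.mpr ⟨powW_alt hs ht (p + 1), alt_congr (j := j) (by simp [powW_length]; try omega) hB2⟩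
    have hne : W ≠ [] := by rw [hWdef, powW]; simp
    have hWH := hred j W hne hB1
    intro hcon
    apply hWH
    have : W.prod = (s * t) ^ (p + 1) * (v₁ ++ [y, z]).prod * ((s * t) ^ (p + 1))⁻¹ *
        (v₁ ++ [y, z]).prod⁻¹ := by
      rw [hWdef]
      simp only [List.prod_append, List.prod_cons, List.prod_nil, powW_prod, mul_one]
      rw [tinv_sinv_pow, hbarprod, key]
      simp only [List.prod_append, List.prod_cons, List.prod_nil, mul_one]
      simp [mul_assoc]
    rwa [this]
  · -- cascaded word W₂
    set W := powW s t (p + 1) ++ (v₁ ++ ([y * (z * t⁻¹) * s⁻¹] ++ (powW t⁻¹ s⁻¹ p ++ wbar)))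
      with hWdef
    have hC3 : Alt G₀ G₁ H j ([y * (z * t⁻¹) * s⁻¹] ++ (powW t⁻¹ s⁻¹ p ++ wbar)) := by
      refine alt_append.mpr ⟨alt_singleton.mpr ⟨?_, hys⟩, alt_congr (j := j + 1) (by simp) hB5⟩
      exact (F G₀ G₁ j).mul_mem ((F G₀ G₁ j).mul_mem hyj.1 (H_le_F hle₀ hle₁ j hzt))
        ((F G₀ G₁ j).inv_mem hs.1)
    have hC2 : Alt G₀ G₁ H j (v₁ ++ ([y * (z * t⁻¹) * s⁻¹] ++ (powW t⁻¹ s⁻¹ p ++ wbar))) :=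
      alt_append.mpr ⟨hv₁, alt_congr (j := j) (by omega) hC3⟩
    have hC1 : Alt G₀ G₁ H j W :=
      alt_append.mpr ⟨powW_alt hs ht (p + 1), alt_congr (j := j) (by simp [powW_length]; try omega) hC2⟩
    have hne : W ≠ [] := by rw [hWdef, powW]; simp
    have hWH := hred j W hne hC1
    intro hcon
    apply hWH
    have : W.prod = (s * t) ^ (p + 1) * (v₁ ++ [y, z]).prod * ((s * t) ^ (p + 1))⁻¹ *
        (v₁ ++ [y, z]).prod⁻¹ := by
      rw [hWdef]
      simp only [List.prod_append, List.prod_cons, List.prod_nil, powW_prod, mul_one]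
      rw [tinv_sinv_pow, hbarprod, key]
      simp only [List.prod_append, List.prod_cons, List.prod_nil, mul_one]
      simp [mul_assoc]
    rwa [this]

end

section Coset
variable {H K : Subgroup G}

lemma exists_not_mem (h : H.relIndex K ≠ 1) : ∃ t, t ∈ (K : Set G) ∧ t ∉ H := by
  by_contra hc
  push_neg at hc
  apply h
  rw [Subgroup.relIndex, Subgroup.index_eq_one, Subgroup.eq_top_iff']
  intro x
  rw [Subgroup.mem_subgroupOf]
  exact hc x x.2

lemma exists_avoid (h1 : H.relIndex K ≠ 1) (h2 : H.relIndex K ≠ 2) {u : G} (hu : u ∈ K) :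
    ∃ t, t ∈ (K : Set G) ∧ t ∉ H ∧ u * t⁻¹ ∉ H := by
  by_contra hc
  push_neg at hc
  set H' := H.subgroupOf K with hH'
  have hcov : ∀ v : K, QuotientGroup.mk (s := H') v = QuotientGroup.mk 1 ∨
      QuotientGroup.mk (s := H') v = QuotientGroup.mk (⟨u, hu⟩ : K)⁻¹ := by
    intro v
    have hkey := hc ((v : G)⁻¹) (K.inv_mem v.2)
    rcases Classical.em ((v:G)⁻¹ ∈ H) with hv | hv
    · left
      rw [QuotientGroup.eq]
      simpa [hH', Subgroup.mem_subgroupOf] using H.inv_mem hv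
    · right
      rw [QuotientGroup.eq]
      have h2 : u * (v:G) ∈ H := by simpa using hkey hv
      rw [Subgroup.mem_subgroupOf]
      simpa [mul_inv_rev] using H.inv_mem h2
  have hsur : Function.Surjective (fun b : Bool =>
      if b then (QuotientGroup.mk (⟨u, hu⟩ : K)⁻¹ : K ⧸ H') else QuotientGroup.mk 1) := by
    intro q
    induction q using QuotientGroup.induction_on with
    | H v =>
      rcases hcov v with h | h
      · exact ⟨false, h.symm⟩
      · exact ⟨true, h.symm⟩
  have hfin : Finite (K ⧸ H') := Finite.of_surjective _ hsur
  have hle : Nat.card (K ⧸ H') ≤ 2 := by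
    have := Nat.card_le_card_of_surjective _ hsur
    simpa using this
  have hpos : 0 < Nat.card (K ⧸ H') := Nat.card_pos
  have hrel : H.relIndex K = Nat.card (K ⧸ H') := by
    rw [Subgroup.relIndex, Subgroup.index]
  omega

lemma coset_eq_of_index_two (h2 : H.relIndex K = 2) {x y : G} (hx : x ∈ K) (hy : y ∈ K)
    (hxH : x ∉ H) (hyH : y ∉ H) : x * y⁻¹ ∈ H := by
  set H' := H.subgroupOf K with hH'
  have h2' : H'.index = 2 := h2
  obtain ⟨a, ha⟩ := Subgroup.index_eq_two_iff.mp h2'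
  have hx' : (⟨x, hx⟩ : K) * a ∈ H' := by
    have hxor := ha ⟨x, hx⟩
    unfold Xor' at hxor
    rcases hxor with ⟨h, _⟩ | ⟨h, _⟩
    · exact h
    · exact absurd (by simpa [hH', Subgroup.mem_subgroupOf] using h) hxH
  have hy' : (⟨y, hy⟩ : K) * a ∈ H' := by
    have hxor := ha ⟨y, hy⟩
    unfold Xor' at hxor
    rcases hxor with ⟨h, _⟩ | ⟨h, _⟩
    · exact h
    · exact absurd (by simpa [hH', Subgroup.mem_subgroupOf] using h) hyH
  have := H'.mul_mem hx' (H'.inv_mem hy')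
  simpa [hH', Subgroup.mem_subgroupOf, mul_inv_rev, mul_assoc] using this

end Coset

lemma alt_iff_altWord {G₀ G₁ H : Subgroup G} {j : ℕ} {w : List G} :
    Alt G₀ G₁ H j w ↔ AltWord G₀ G₁ H j w := by
  unfold Alt AltWord F
  constructor <;> intro h i hi <;> have h2 := h i hi <;>
    by_cases hp : (i + j) % 2 = 0 <;> simp [hp] at h2 ⊢ <;> exact h2

lemma nf_total {G₀ G₁ H : Subgroup G} (hA : IsAmalgam G₀ G₁ H) (g : G) : NF G₀ G₁ H g := by
  have hg : g ∈ Subgroup.closure ((G₀ : Set G) ∪ (G₁ : Set G)) := by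
    rw [hA.closure_eq_top]; trivial
  refine Subgroup.closure_induction (p := fun x _ => NF G₀ G₁ H x) ?_ ?_ ?_ ?_ hg
  · intro x hx
    by_cases hxH : x ∈ H
    · exact Or.inl hxH
    rcases hx with hx | hx
    · exact Or.inr ⟨0, [x], by simp, alt_singleton.mpr ⟨by simpa [F] using hx, hxH⟩, by simp⟩
    · exact Or.inr ⟨1, [x], by simp, alt_singleton.mpr ⟨by simpa [F] using hx, hxH⟩, by simp⟩
  · exact Or.inl H.one_mem
  · exact fun x y _ _ hx hy => nf_mul hA.le_left hA.le_right hx hy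
  · exact fun x _ hx => nf_inv hA.le_left hA.le_right hx

lemma relindex_F_ne_one {G₀ G₁ H : Subgroup G} (hnd : Nondegenerate G₀ G₁ H) (m : ℕ) :
    H.relIndex (F G₀ G₁ m) ≠ 1 := by
  unfold F; split
  · exact hnd.1
  · exact hnd.2.1

lemma relindex_F_ne_two {G₀ G₁ H : Subgroup G} (hnd : Nondegenerate G₀ G₁ H) {m : ℕ}
    (h : H.relIndex (F G₀ G₁ (m + 1)) = 2) : H.relIndex (F G₀ G₁ m) ≠ 2 := by
  unfold F at h ⊢
  by_cases hm : m % 2 = 0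
  · rw [if_pos hm]
    rw [if_neg (by omega)] at h
    exact fun hc => hnd.2.2 ⟨hc, h⟩
  · rw [if_neg hm]
    rw [if_pos (by omega)] at h
    exact fun hc => hnd.2.2 ⟨h, hc⟩

lemma exists_conj_distinct {G₀ G₁ H : Subgroup G} (hA : IsAmalgam G₀ G₁ H)
    (hnd : Nondegenerate G₀ G₁ H) {g : G} (hg : g ∉ H) :
    ∃ u c : G, ∀ r : ℕ, 1 ≤ r →
      c ^ r * (u * g * u⁻¹) * (c ^ r)⁻¹ * (u * g * u⁻¹)⁻¹ ∉ H := by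
  have hred : ∀ (j : ℕ) (w : List G), w ≠ [] → Alt G₀ G₁ H j w → w.prod ∉ H :=
    fun j w hne hw => hA.reduced j w hne (alt_iff_altWord.mp hw)
  rcases nf_total hA g with hgH | ⟨j, w, hne, hw, hprod⟩
  · exact absurd hgH hg
  obtain ⟨u, j', w', hne', hw', hpar', hprod'⟩ :=
    cyclic_reduce hA.le_left hA.le_right w.length w rfl hne j hw
  rw [hprod] at hprod'
  rcases hpar' with heven | hone
  · -- even length, so at least 2
    obtain ⟨v₂, z, rfl⟩ : ∃ v₂ z, w' = v₂ ++ [z] := by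
      rcases List.eq_nil_or_concat w' with rfl | ⟨v₂, z, h⟩
      · exact absurd rfl hne'
      · exact ⟨v₂, z, by simpa using h⟩
    have hv₂ : v₂ ≠ [] := by
      rintro rfl
      simp at heven
    obtain ⟨v₁, y, rfl⟩ : ∃ v₁ y, v₂ = v₁ ++ [y] := by
      rcases List.eq_nil_or_concat v₂ with rfl | ⟨v₁, y, h⟩
      · exact absurd rfl hv₂
      · exact ⟨v₁, y, by simpa using h⟩
    rw [show (v₁ ++ [y]) ++ [z] = v₁ ++ [y, z] by simp] at hw' hprod' heven
    have hv : v₁.length % 2 = 0 := by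
      simp only [List.length_append, List.length_cons, List.length_nil] at heven
      omega
    have hyz : Alt G₀ G₁ H (j' + v₁.length) [y, z] := (alt_append.mp hw').2
    have hy : y ∈ (F G₀ G₁ (j' + v₁.length) : Set G) \ H := (alt_cons.mp hyz).1
    have hz : z ∈ (F G₀ G₁ (j' + v₁.length + 1) : Set G) \ H :=
      alt_singleton.mp (alt_cons.mp hyz).2
    have hyj : y ∈ (F G₀ G₁ j' : Set G) \ H := mem_diff_congr (by omega) hy
    have hzj : z ∈ (F G₀ G₁ (j' + 1) : Set G) \ H := mem_diff_congr (by omega) hz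
    by_cases h2 : H.relIndex (F G₀ G₁ (j' + 1)) = 2
    · -- index two on the `z` side; choose `s` avoiding a coset
      obtain ⟨t, htF, htH⟩ := exists_not_mem (relindex_F_ne_one hnd (j' + 1))
      have hzt : z * t⁻¹ ∈ H := coset_eq_of_index_two h2 hzj.1 htF hzj.2 htH
      obtain ⟨s, hsF, hsH, hus⟩ := exists_avoid (relindex_F_ne_one hnd j')
        (relindex_F_ne_two hnd h2)
        (u := y * (z * t⁻¹)) ((F G₀ G₁ j').mul_mem hyj.1 (H_le_F hA.le_left hA.le_right j' hzt))
      refine ⟨u, s * t, ?_⟩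
      intro r hr
      rw [← hprod']
      exact conj_pow_not_mem_even hA.le_left hA.le_right hred hw' hv ⟨hsF, hsH⟩ ⟨htF, htH⟩
        (Or.inr ⟨hzt, hus⟩) r hr
    · -- at least three cosets on the `z` side
      obtain ⟨t, htF, htH, hzt⟩ := exists_avoid (relindex_F_ne_one hnd (j' + 1)) h2
        (u := z) hzj.1
      obtain ⟨s, hsF, hsH⟩ := exists_not_mem (relindex_F_ne_one hnd j')
      refine ⟨u, s * t, ?_⟩
      intro r hr
      rw [← hprod']
      exact conj_pow_not_mem_even hA.le_left hA.le_right hred hw' hv ⟨hsF, hsH⟩ ⟨htF, htH⟩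
        (Or.inl hzt) r hr
  · -- single letter
    obtain ⟨x, rfl⟩ : ∃ x, w' = [x] := by
      rcases w' with _ | ⟨x, _ | _⟩ <;> simp_all
    have hx : x ∈ (F G₀ G₁ j' : Set G) \ H := alt_singleton.mp hw'
    obtain ⟨b, hbF, hbH⟩ := exists_not_mem (relindex_F_ne_one hnd j')
    obtain ⟨a, haF, haH⟩ := exists_not_mem (relindex_F_ne_one hnd (j' + 1))
    refine ⟨u, b * a, ?_⟩
    intro r hr
    have hx' : u * g * u⁻¹ = x := by simpa using hprod'.symm
    rw [hx']
    exact conj_pow_not_mem_single hA.le_left hA.le_right hred hx ⟨hbF, hbH⟩ ⟨haF, haH⟩ r hr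

lemma infinite_class {G₀ G₁ H : Subgroup G} (hA : IsAmalgam G₀ G₁ H)
    (hnd : Nondegenerate G₀ G₁ H) {g : G} (hg : g ∉ H) :
    {x : G | ∃ y : G, y * g * y⁻¹ = x}.Infinite := by
  obtain ⟨u, c, hc⟩ := exists_conj_distinct hA hnd hg
  set g' := u * g * u⁻¹ with hg'def
  have key : ∀ p q : ℕ, p < q →
      c ^ (p + 1) * g' * (c ^ (p + 1))⁻¹ = c ^ (q + 1) * g' * (c ^ (q + 1))⁻¹ → False := by
    intro p q hpq e
    set d := q - p with hd
    have h1 : c ^ (q + 1) = c ^ (p + 1) * c ^ d := by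
      rw [← pow_add]; congr 1; omega
    rw [h1, mul_inv_rev] at e
    have h3 : c ^ d * g' * (c ^ d)⁻¹ =
        (c ^ (p + 1))⁻¹ * (c ^ (p + 1) * c ^ d * g' * ((c ^ d)⁻¹ * (c ^ (p + 1))⁻¹)) *
          c ^ (p + 1) := by
      group
    rw [← e] at h3
    have h4 : c ^ d * g' * (c ^ d)⁻¹ = g' := by rw [h3]; group
    apply hc d (by omega)
    rw [show c ^ d * g' * (c ^ d)⁻¹ * g'⁻¹ = 1 by rw [h4]; group]
    exact H.one_mem
  refine Set.infinite_of_injective_forall_mem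
    (f := fun n : ℕ => c ^ (n + 1) * g' * (c ^ (n + 1))⁻¹) ?_ ?_
  · intro p q hpq
    rcases Nat.lt_trichotomy p q with h | h | h
    · exact absurd hpq (fun e => key p q h e)
    · exact h
    · exact absurd hpq.symm (fun e => key q p h e)
  · intro n
    refine ⟨c ^ (n + 1) * u, ?_⟩
    rw [hg'def]
    group

end AmalgamProof

/-- Let `G = G₀ *_H G₁` be a nondegenerate free product with amalgamation. Then `FC(G)`,
the subgroup of elements of `G` with finite conjugacy class, is contained in `H`; in
particular, every element of `(G₀ ∪ G₁) \ H` has infinite conjugacy class in `G`. -/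
theorem fc_subset_of_amalgam {G : Type*} [Group G] (G₀ G₁ H : Subgroup G)
    (ha : IsAmalgam G₀ G₁ H) (hnd : Nondegenerate G₀ G₁ H) :
    (∀ g : G, {x : G | ∃ y : G, y * g * y⁻¹ = x}.Finite → g ∈ H) ∧
    (∀ g ∈ (G₀ : Set G) ∪ (G₁ : Set G), g ∉ H →
      {x : G | ∃ y : G, y * g * y⁻¹ = x}.Infinite) := by
  constructor
  · intro g hfin
    by_contra hgH
    exact AmalgamProof.infinite_class ha hnd hgH hfin
  · intro g _ hgH
    exact AmalgamProof.infinite_class ha hnd hgH
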